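/- arXiv:1403.8027 — 2 statements merged into one kernel-verified Lean document; each statement's English description precedes it below -/
import Mathlib

section
/- Let G be a (P5, P5-bar)-free graph. Then every induced 5-cycle of G is contained in a buoy of G which is either full (contains all vertices of G) or whose vertex set is a module of G. -/
open SimpleGraph

/-- A graph is `k`-critical if its chromatic number equals `k` and every proper
induced subgraph is `(k-1)`-colorable. -/
def IsKCritical {V : Type*} (G : SimpleGraph V) (k : ℕ) : Prop :=
  G.chromaticNumber = k ∧ ∀ s : Set V, s ≠ Set.univ → (G.induce s).Colorable (k - 1)

/-- A set `X` of vertices is a module if every vertex outside `X` is adjacent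
either to all vertices of `X` or to none of them. -/
def IsModule {V : Type*} (G : SimpleGraph V) (X : Set V) : Prop :=
  ∀ v ∉ X, (∀ x ∈ X, G.Adj v x) ∨ (∀ x ∈ X, ¬ G.Adj v x)

/-- `G` contains no induced subgraph isomorphic to `H`. -/
def InducedFree {V W : Type*} (G : SimpleGraph V) (H : SimpleGraph W) : Prop :=
  ¬ ∃ s : Set V, Nonempty ((G.induce s) ≃g H)

/-- `G` is (P5, P5-bar)-free. -/
def P5P5barFree {V : Type*} (G : SimpleGraph V) : Prop :=
  InducedFree G (pathGraph 5) ∧ InducedFree G (pathGraph 5)ᶜ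

/-- A buoy in `G` given by its five non-empty bags. -/
structure IsBuoy {V : Type*} (G : SimpleGraph V) (B : Fin 5 → Set V) : Prop where
  nonempty : ∀ i, (B i).Nonempty
  disjoint : ∀ i j, i ≠ j → Disjoint (B i) (B j)
  adj_next : ∀ i, ∀ x ∈ B i, ∀ y ∈ B (i + 1), G.Adj x y
  not_adj_skip : ∀ i, ∀ x ∈ B i, ∀ y ∈ B (i + 2), ¬ G.Adj x y

/-- `G` is a pseudo-buoy with (possibly empty) bags `B 0, …, B 4` partitioning
its vertex set. -/
structure IsPseudoBuoy {V : Type*} (G : SimpleGraph V) (B : Fin 5 → Set V) : Prop where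
  cover : (⋃ i, B i) = Set.univ
  disjoint : ∀ i j, i ≠ j → Disjoint (B i) (B j)
  adj_next : ∀ i, ∀ x ∈ B i, ∀ y ∈ B (i + 1), G.Adj x y
  not_adj_skip : ∀ i, ∀ x ∈ B i, ∀ y ∈ B (i + 2), ¬ G.Adj x y

/-- The graph obtained from `G` by substituting `H` for the module `M`. -/
def substitute {V W : Type*} (G : SimpleGraph V) (M : Set V) (H : SimpleGraph W) :
    SimpleGraph ({v : V // v ∉ M} ⊕ W) where
  Adj x y :=
    match x, y with
    | Sum.inl a, Sum.inl b => G.Adj a b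
    | Sum.inl a, Sum.inr _ => ∃ m ∈ M, G.Adj a m
    | Sum.inr _, Sum.inl b => ∃ m ∈ M, G.Adj b m
    | Sum.inr a, Sum.inr b => H.Adj a b
  symm := ⟨by
    rintro (a | a) (b | b) h
    · exact G.adj_symm h
    · exact h
    · exact h
    · exact H.adj_symm h⟩
  loopless := ⟨by
    rintro (a | a) h
    · exact G.irrefl h
    · exact H.irrefl h⟩

/-- The join of two graphs. -/
def joinGraph {V W : Type*} (G : SimpleGraph V) (H : SimpleGraph W) :
    SimpleGraph (V ⊕ W) where
  Adj x y :=
    match x, y with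
    | Sum.inl a, Sum.inl b => G.Adj a b
    | Sum.inl _, Sum.inr _ => True
    | Sum.inr _, Sum.inl _ => True
    | Sum.inr a, Sum.inr b => H.Adj a b
  symm := ⟨by
    rintro (a | a) (b | b) h
    · exact G.adj_symm h
    · trivial
    · trivial
    · exact H.adj_symm h⟩
  loopless := ⟨by
    rintro (a | a) h
    · exact G.irrefl h
    · exact H.irrefl h⟩


section BuoyAux

open SimpleGraph

variable {V : Type*} {G : SimpleGraph V}

lemma embed_of_pattern (H : SimpleGraph (Fin 5)) (w : Fin 5 → V)
    (hinj : Function.Injective w)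
    (hadj : ∀ i j, G.Adj (w i) (w j) ↔ H.Adj i j) :
    ∃ s : Set V, Nonempty ((G.induce s) ≃g H) := by
  refine ⟨Set.range w, ⟨SimpleGraph.Iso.symm ⟨Equiv.ofInjective w hinj, ?_⟩⟩⟩
  intro a b
  simp [hadj]

lemma no_pendant (x : Fin 5 → V) (hinj : Function.Injective x)
    (hC5 : ∀ i j, G.Adj (x i) (x j) ↔ (j = i + 1 ∨ i = j + 1)) (v : V)
    (hfree : InducedFree G (pathGraph 5))
    (hv : ∀ i, v ≠ x i)
    (h0 : G.Adj v (x 0)) (h1 : ¬ G.Adj v (x 1)) (h2 : ¬ G.Adj v (x 2))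
    (h3 : ¬ G.Adj v (x 3)) : False := by
  have hne : ∀ i j : Fin 5, i ≠ j → x i ≠ x j := fun i j h e => h (hinj e)
  have h0' := h0.symm
  have h1' : ¬ G.Adj (x 1) v := fun h => h1 h.symm
  have h2' : ¬ G.Adj (x 2) v := fun h => h2 h.symm
  have h3' : ¬ G.Adj (x 3) v := fun h => h3 h.symm
  have e01 : G.Adj (x 0) (x 1) := (hC5 0 1).2 (by decide)
  have e12 : G.Adj (x 1) (x 2) := (hC5 1 2).2 (by decide)
  have e23 : G.Adj (x 2) (x 3) := (hC5 2 3).2 (by decide)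
  have n02 : ¬ G.Adj (x 0) (x 2) := fun h => by rcases (hC5 0 2).1 h with h | h <;> revert h <;> decide
  have n03 : ¬ G.Adj (x 0) (x 3) := fun h => by rcases (hC5 0 3).1 h with h | h <;> revert h <;> decide
  have n13 : ¬ G.Adj (x 1) (x 3) := fun h => by rcases (hC5 1 3).1 h with h | h <;> revert h <;> decide
  have e01' := e01.symm; have e12' := e12.symm; have e23' := e23.symm
  have n02' : ¬ G.Adj (x 2) (x 0) := fun h => n02 h.symm
  have n03' : ¬ G.Adj (x 3) (x 0) := fun h => n03 h.symm
  have n13' : ¬ G.Adj (x 3) (x 1) := fun h => n13 h.symm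
  apply hfree
  apply embed_of_pattern (pathGraph 5) ![v, x 0, x 1, x 2, x 3]
  · intro i j hij
    fin_cases i <;> fin_cases j <;> simp_all <;>
      first
        | rfl
        | exact absurd hij (hv _)
        | exact absurd hij.symm (hv _)
  · intro i j
    fin_cases i <;> fin_cases j <;>
      simp [pathGraph_adj, h0, h0', h1, h1', h2, h2', h3, h3',
        e01, e12, e23, e01', e12', e23', n02, n03, n13, n02', n03', n13'] <;>
      omega

lemma no_house (x : Fin 5 → V) (hinj : Function.Injective x)
    (hC5 : ∀ i j, G.Adj (x i) (x j) ↔ (j = i + 1 ∨ i = j + 1)) (v : V)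
    (hfree : InducedFree G (pathGraph 5)ᶜ)
    (hv : ∀ i, v ≠ x i)
    (h0 : G.Adj v (x 0)) (h2 : G.Adj v (x 2)) (h3 : G.Adj v (x 3))
    (h4 : ¬ G.Adj v (x 4)) : False := by
  have hne : ∀ i j : Fin 5, i ≠ j → x i ≠ x j := fun i j h e => h (hinj e)
  have h0' := h0.symm; have h2' := h2.symm; have h3' := h3.symm
  have h4' : ¬ G.Adj (x 4) v := fun h => h4 h.symm
  have e23 : G.Adj (x 2) (x 3) := (hC5 2 3).2 (by decide)
  have e34 : G.Adj (x 3) (x 4) := (hC5 3 4).2 (by decide)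
  have e40 : G.Adj (x 4) (x 0) := (hC5 4 0).2 (by decide)
  have n02 : ¬ G.Adj (x 0) (x 2) := fun h => by rcases (hC5 0 2).1 h with h | h <;> revert h <;> decide
  have n03 : ¬ G.Adj (x 0) (x 3) := fun h => by rcases (hC5 0 3).1 h with h | h <;> revert h <;> decide
  have n24 : ¬ G.Adj (x 2) (x 4) := fun h => by rcases (hC5 2 4).1 h with h | h <;> revert h <;> decide
  have e23' := e23.symm; have e34' := e34.symm; have e40' := e40.symm
  have n02' : ¬ G.Adj (x 2) (x 0) := fun h => n02 h.symm
  have n03' : ¬ G.Adj (x 3) (x 0) := fun h => n03 h.symm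
  have n24' : ¬ G.Adj (x 4) (x 2) := fun h => n24 h.symm
  apply hfree
  apply embed_of_pattern (pathGraph 5)ᶜ ![v, x 4, x 2, x 0, x 3]
  · intro i j hij
    fin_cases i <;> fin_cases j <;> simp_all <;>
      first
        | rfl
        | exact absurd hij (hv _)
        | exact absurd hij.symm (hv _)
  · intro i j
    fin_cases i <;> fin_cases j <;>
      simp [compl_adj, pathGraph_adj, Fin.ext_iff, h0, h0', h2, h2', h3, h3', h4, h4',
        e23, e34, e40, e23', e34', e40', n02, n03, n24, n02', n03', n24'] <;>
      omega

/-- Boolean version of the allowed neighbourhood patterns on a `C5`. -/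
abbrev AllowedB (t : Fin 5 → Bool) : Prop :=
  (∀ i, t i = false) ∨ (∀ i, t i = true) ∨
    ∃ i, t (i+1) = true ∧ t (i+4) = true ∧ t (i+2) = false ∧ t (i+3) = false

lemma allowedB_cases : ∀ t : Fin 5 → Bool, ¬ AllowedB t →
    (∃ i, t i = true ∧ t (i+1) = false ∧ t (i+2) = false ∧ t (i+3) = false) ∨
    (∃ i, t i = true ∧ t (i+2) = true ∧ t (i+3) = true ∧ t (i+4) = false) := by decide

set_option synthInstance.maxSize 2000 in
set_option maxHeartbeats 2000000 in
lemma allowedB_mixed : ∀ t t' : Fin 5 → Bool, ∀ a j : Fin 5,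
    AllowedB t → AllowedB t' → t a = true → t' a = false →
    (∀ k, k ≠ a → t k = t' k) → j ≠ a → (t j = true ↔ (j = a + 1 ∨ j = a + 4)) := by decide

lemma rotate_hC5 {x : Fin 5 → V}
    (hC5 : ∀ i j, G.Adj (x i) (x j) ↔ (j = i + 1 ∨ i = j + 1)) (k : Fin 5) :
    ∀ i j, G.Adj (x (k + i)) (x (k + j)) ↔ (j = i + 1 ∨ i = j + 1) := by
  intro i j
  rw [hC5]
  constructor
  · rintro (h | h)
    · exact Or.inl (by have : k + j = k + (i + 1) := by rw [h]; exact add_assoc _ _ _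
                       exact add_left_cancel this)
    · exact Or.inr (by have : k + i = k + (j + 1) := by rw [h]; exact add_assoc _ _ _
                       exact add_left_cancel this)
  · rintro (h | h)
    · exact Or.inl (by rw [h]; exact (add_assoc _ _ _).symm)
    · exact Or.inr (by rw [h]; exact (add_assoc _ _ _).symm)

lemma pattern_allowed (x : Fin 5 → V) (hinj : Function.Injective x)
    (hC5 : ∀ i j, G.Adj (x i) (x j) ↔ (j = i + 1 ∨ i = j + 1)) (v : V)
    (hfree1 : InducedFree G (pathGraph 5)) (hfree2 : InducedFree G (pathGraph 5)ᶜ)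
    (hv : ∀ i, v ≠ x i) :
    (∀ i, ¬ G.Adj v (x i)) ∨ (∀ i, G.Adj v (x i)) ∨
      ∃ i, G.Adj v (x (i+1)) ∧ G.Adj v (x (i+4)) ∧ ¬ G.Adj v (x (i+2)) ∧ ¬ G.Adj v (x (i+3)) := by
  classical
  by_contra hcon
  set t : Fin 5 → Bool := fun i => decide (G.Adj v (x i)) with ht
  have htt : ∀ i, t i = true ↔ G.Adj v (x i) := fun i => by simp [ht]
  have htf : ∀ i, t i = false ↔ ¬ G.Adj v (x i) := fun i => by simp [ht]
  have hA : ¬ AllowedB t := by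
    intro h
    apply hcon
    rcases h with h | h | ⟨i, h1, h2, h3, h4⟩
    · exact Or.inl (fun i => (htf i).1 (h i))
    · exact Or.inr (Or.inl (fun i => (htt i).1 (h i)))
    · exact Or.inr (Or.inr ⟨i, (htt _).1 h1, (htt _).1 h2, (htf _).1 h3, (htf _).1 h4⟩)
  have hrinj : ∀ k : Fin 5, Function.Injective (fun j => x (k + j)) :=
    fun k a b e => add_left_cancel (hinj e)
  rcases allowedB_cases t hA with ⟨i, h0, h1, h2, h3⟩ | ⟨i, h0, h2, h3, h4⟩
  · exact no_pendant (fun j => x (i + j)) (hrinj i) (rotate_hC5 hC5 i) v hfree1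
      (fun j => hv _)
      (by simpa using (htt _).1 (by simpa using h0))
      (fun h => ((htf _).1 h1) (by simpa using h))
      (fun h => ((htf _).1 h2) (by simpa using h))
      (fun h => ((htf _).1 h3) (by simpa using h))
  · exact no_house (fun j => x (i + j)) (hrinj i) (rotate_hC5 hC5 i) v hfree2
      (fun j => hv _)
      (by simpa using (htt _).1 (by simpa using h0))
      (by simpa using (htt _).1 h2)
      (by simpa using (htt _).1 h3)
      (fun h => ((htf _).1 h4) (by simpa using h))

end BuoyAux

/-- In a (P5, P5-bar)-free graph, every induced 5-cycle is contained in a buoy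
which is either full or whose vertex set is a module. -/
theorem C5_in_full_or_module_buoy {V : Type*} [Fintype V]
    (G : SimpleGraph V) (hfree : P5P5barFree G)
    (s : Set V) (hs : Nonempty ((G.induce s) ≃g cycleGraph 5)) :
    ∃ B : Fin 5 → Set V, IsBuoy G B ∧ s ⊆ (⋃ i, B i) ∧
      ((⋃ i, B i) = Set.univ ∨ IsModule G (⋃ i, B i)) := by
  classical
  obtain ⟨e⟩ := hs
  set c : Fin 5 → V := fun i => ((e.symm i : {a // a ∈ s}) : V) with hc
  have hcyc : ∀ i j : Fin 5, (cycleGraph 5).Adj i j ↔ (j = i + 1 ∨ i = j + 1) := by decide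
  have hC5c : ∀ i j : Fin 5, G.Adj (c i) (c j) ↔ (j = i + 1 ∨ i = j + 1) := by
    intro i j
    rw [← hcyc]
    exact e.symm.map_rel_iff (a := i) (b := j)
  have hc_inj : Function.Injective c :=
    fun i j h => e.symm.toEquiv.injective (Subtype.coe_injective h)
  have hc_mem : ∀ i, c i ∈ s := fun i => (e.symm i).2
  have hs_sub : ∀ a ∈ s, ∃ i, c i = a := by
    intro a ha
    exact ⟨e ⟨a, ha⟩, by simp [hc]⟩
  -- the collection of buoys containing s
  set Good : (Fin 5 → Set V) → Prop := fun B => IsBuoy G B ∧ s ⊆ ⋃ i, B i with hGoodDef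
  have hskip : ∀ i : Fin 5, ¬ (i + 2 = i + 1 ∨ i = i + 2 + 1) := by decide
  have hGood0 : Good (fun i => {c i}) := by
    refine ⟨⟨fun i => ⟨c i, rfl⟩, ?_, ?_, ?_⟩, ?_⟩
    · intro i j hij
      simp only [Set.disjoint_singleton_left, Set.mem_singleton_iff]
      exact fun h => hij (hc_inj h)
    · rintro i x rfl y rfl
      exact (hC5c i (i + 1)).2 (Or.inl rfl)
    · rintro i x rfl y rfl h
      exact hskip i ((hC5c i (i + 2)).1 h)
    · intro a ha
      obtain ⟨i, rfl⟩ := hs_sub a ha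
      exact Set.mem_iUnion.2 ⟨i, rfl⟩
  have hfin : ∃ B, Good B ∧ ∀ B', Good B' → (⋃ i, B' i).ncard ≤ (⋃ i, B i).ncard := by
    have hne : Nonempty {B // Good B} := ⟨⟨_, hGood0⟩⟩
    obtain ⟨⟨B, hB⟩, hmax⟩ :=
      Finite.exists_max (fun B : {B // Good B} => (⋃ i, B.1 i).ncard)
    exact ⟨B, hB, fun B' hB' => hmax ⟨B', hB'⟩⟩
  obtain ⟨B, ⟨hB, hsub⟩, hmax⟩ := hfin
  refine ⟨B, hB, hsub, Or.inr ?_⟩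
  intro v hv
  by_contra hcon
  push_neg at hcon
  obtain ⟨⟨q0, hq0, hnadj0⟩, ⟨p0, hp0, hadj0⟩⟩ := hcon
  have hvB : ∀ i, v ∉ B i := fun i h => hv (Set.mem_iUnion.2 ⟨i, h⟩)
  obtain ⟨r, hr⟩ : ∃ r : Fin 5 → V, ∀ i, r i ∈ B i := by
    choose r hr using hB.nonempty
    exact ⟨r, hr⟩
  have htri : ∀ i j : Fin 5, i ≠ j → (j = i + 1 ∨ i = j + 1 ∨ j = i + 2 ∨ i = j + 2) := by decide
  have hne1 : ∀ a : Fin 5, a + 1 ≠ a := by decide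
  have hne2 : ∀ a : Fin 5, a + 2 ≠ a := by decide
  have hne3 : ∀ a : Fin 5, a + 3 ≠ a := by decide
  have hne4 : ∀ a : Fin 5, a + 4 ≠ a := by decide
  have hf2 : ∀ a : Fin 5, ¬ (a + 2 = a + 1 ∨ a + 2 = a + 4) := by decide
  have hf3 : ∀ a : Fin 5, ¬ (a + 3 = a + 1 ∨ a + 3 = a + 4) := by decide
  have K : ∀ y : Fin 5 → V, (∀ i, y i ∈ B i) →
      (∀ i, ¬ G.Adj v (y i)) ∨ (∀ i, G.Adj v (y i)) ∨
        ∃ i, G.Adj v (y (i+1)) ∧ G.Adj v (y (i+4)) ∧ ¬ G.Adj v (y (i+2)) ∧ ¬ G.Adj v (y (i+3)) := by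
    intro y hy
    have hyinj : Function.Injective y := by
      intro i j hij
      by_contra hne'
      exact Set.disjoint_left.1 (hB.disjoint i j hne') (hy i) (hij ▸ hy j)
    have hyC5 : ∀ i j, G.Adj (y i) (y j) ↔ (j = i + 1 ∨ i = j + 1) := by
      intro i j
      constructor
      · intro h
        rcases htri i j (fun e => G.irrefl (e ▸ h)) with h1 | h1 | h1 | h1
        · exact Or.inl h1
        · exact Or.inr h1
        · exact absurd h (by subst h1; exact hB.not_adj_skip i _ (hy i) _ (hy _))
        · exact absurd h
            (by subst h1; exact fun h' => hB.not_adj_skip j _ (hy j) _ (hy _) h'.symm)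
      · rintro (h1 | h1)
        · subst h1; exact hB.adj_next i _ (hy i) _ (hy _)
        · subst h1; exact (hB.adj_next j _ (hy j) _ (hy _)).symm
    have hvy : ∀ i, v ≠ y i := fun i h => hv (Set.mem_iUnion.2 ⟨i, h ▸ hy i⟩)
    exact pattern_allowed y hyinj hyC5 v hfree.1 hfree.2 hvy
  have toB : ∀ y : Fin 5 → V, (∀ i, y i ∈ B i) →
      AllowedB (fun i => decide (G.Adj v (y i))) := by
    intro y hy
    rcases K y hy with h | h | ⟨i, h1, h2, h3, h4⟩
    · exact Or.inl fun i => decide_eq_false (h i)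
    · exact Or.inr (Or.inl fun i => decide_eq_true (h i))
    · exact Or.inr (Or.inr ⟨i, decide_eq_true h1, decide_eq_true h2,
        decide_eq_false h3, decide_eq_false h4⟩)
  have main : ∃ a : Fin 5, (∀ z ∈ B (a+1), G.Adj v z) ∧ (∀ z ∈ B (a+4), G.Adj v z) ∧
      (∀ z ∈ B (a+2), ¬ G.Adj v z) ∧ (∀ z ∈ B (a+3), ¬ G.Adj v z) := by
    by_cases hpure : ∀ i, (∀ z ∈ B i, G.Adj v z) ∨ (∀ z ∈ B i, ¬ G.Adj v z)
    · rcases K r hr with h | h | ⟨i, h1, h2, h3, h4⟩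
      · exfalso
        obtain ⟨i, hpi⟩ := Set.mem_iUnion.1 hp0
        rcases hpure i with hh | hh
        · exact h i (hh _ (hr i))
        · exact hh p0 hpi hadj0
      · exfalso
        obtain ⟨i, hqi⟩ := Set.mem_iUnion.1 hq0
        rcases hpure i with hh | hh
        · exact hnadj0 (hh q0 hqi)
        · exact hh _ (hr i) (h i)
      · refine ⟨i, ?_, ?_, ?_, ?_⟩
        · rcases hpure (i+1) with hh | hh
          · exact hh
          · exact absurd h1 (hh _ (hr _))
        · rcases hpure (i+4) with hh | hh
          · exact hh
          · exact absurd h2 (hh _ (hr _))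
        · rcases hpure (i+2) with hh | hh
          · exact absurd (hh _ (hr _)) h3
          · exact hh
        · rcases hpure (i+3) with hh | hh
          · exact absurd (hh _ (hr _)) h4
          · exact hh
    · push_neg at hpure
      obtain ⟨a, ⟨q, hqB, hqn⟩, p, hpB, hpa⟩ := hpure
      have key : ∀ j, j ≠ a → ∀ z ∈ B j, (G.Adj v z ↔ (j = a + 1 ∨ j = a + 4)) := by
        intro j hja z hz
        set y : Fin 5 → V := Function.update (Function.update r a p) j z with hy
        set y' : Fin 5 → V := Function.update (Function.update r a q) j z with hy'
        have hyB : ∀ i, y i ∈ B i := by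
          intro i
          rcases eq_or_ne i j with rfl | hij
          · simpa [hy] using hz
          · rcases eq_or_ne i a with rfl | hia
            · simpa [hy, Function.update_of_ne hij] using hpB
            · simpa [hy, Function.update_of_ne hij, Function.update_of_ne hia] using hr i
        have hyB' : ∀ i, y' i ∈ B i := by
          intro i
          rcases eq_or_ne i j with rfl | hij
          · simpa [hy'] using hz
          · rcases eq_or_ne i a with rfl | hia
            · simpa [hy', Function.update_of_ne hij] using hqB
            · simpa [hy', Function.update_of_ne hij, Function.update_of_ne hia] using hr i
        have hya : y a = p := by
          rw [hy, Function.update_of_ne (Ne.symm hja), Function.update_self]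
        have hya' : y' a = q := by
          rw [hy', Function.update_of_ne (Ne.symm hja), Function.update_self]
        have hyj : y j = z := by rw [hy, Function.update_self]
        have heq : ∀ k, k ≠ a → y k = y' k := by
          intro k hk
          rcases eq_or_ne k j with rfl | hkj
          · rw [hy, hy', Function.update_self, Function.update_self]
          · rw [hy, hy', Function.update_of_ne hkj, Function.update_of_ne hkj,
              Function.update_of_ne hk, Function.update_of_ne hk]
        have := allowedB_mixed (fun i => decide (G.Adj v (y i)))
          (fun i => decide (G.Adj v (y' i))) a j (toB y hyB) (toB y' hyB')
          (by simp [hya, hpa]) (by simp [hya', hqn]) (fun k hk => by simp only [heq k hk]) hja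
        simpa [hyj] using this
      refine ⟨a, ?_, ?_, ?_, ?_⟩
      · exact fun z hz => (key (a+1) (hne1 a) z hz).2 (Or.inl rfl)
      · exact fun z hz => (key (a+4) (hne4 a) z hz).2 (Or.inr rfl)
      · exact fun z hz hAdj => hf2 a ((key (a+2) (hne2 a) z hz).1 hAdj)
      · exact fun z hz hAdj => hf3 a ((key (a+3) (hne3 a) z hz).1 hAdj)
  obtain ⟨a, hc1, hc4, hc2, hc3⟩ := main
  have hga1 : ∀ a i : Fin 5, i + 1 = a → i = a + 4 := by decide
  have hga2 : ∀ a i : Fin 5, i + 2 = a → i = a + 3 := by decide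
  set B' : Fin 5 → Set V := Function.update B a (insert v (B a)) with hB'd
  have hB'a : B' a = insert v (B a) := by rw [hB'd, Function.update_self]
  have hB'ne : ∀ i, i ≠ a → B' i = B i := fun i h => by
    rw [hB'd, Function.update_of_ne h]
  have hBsub : ∀ i, B i ⊆ B' i := by
    intro i
    rcases eq_or_ne i a with rfl | h
    · rw [hB'a]; exact Set.subset_insert _ _
    · rw [hB'ne i h]
  have hmem' : ∀ i, ∀ x ∈ B' i, x = v ∧ i = a ∨ x ∈ B i := by
    intro i x hx
    rcases eq_or_ne i a with rfl | h
    · rw [hB'a] at hx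
      rcases hx with rfl | hx
      · exact Or.inl ⟨rfl, rfl⟩
      · exact Or.inr hx
    · exact Or.inr (by rwa [hB'ne i h] at hx)
  have hGood' : Good B' := by
    refine ⟨⟨?_, ?_, ?_, ?_⟩, ?_⟩
    · intro i
      exact ((hB.nonempty i).mono (hBsub i))
    · intro i j hij
      rcases eq_or_ne i a with rfl | hia
      · rw [hB'a, hB'ne j (Ne.symm hij)]
        refine Set.disjoint_left.2 ?_
        rintro x (rfl | hx)
        · exact hvB j
        · exact fun hj => Set.disjoint_left.1 (hB.disjoint _ _ hij) hx hj
      · rcases eq_or_ne j a with rfl | hja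
        · rw [hB'a, hB'ne i hia]
          refine (Set.disjoint_left.2 ?_).symm
          rintro x (rfl | hx)
          · exact hvB i
          · exact fun hj => Set.disjoint_left.1 (hB.disjoint _ _ (Ne.symm hij)) hx hj
        · rw [hB'ne i hia, hB'ne j hja]
          exact hB.disjoint i j hij
    · intro i x hx y hy
      rcases hmem' i x hx with ⟨rfl, rfl⟩ | hxB
      · rw [hB'ne _ (hne1 _)] at hy
        exact hc1 y hy
      · rcases hmem' (i+1) y hy with ⟨rfl, hia⟩ | hyB
        · have : i = a + 4 := hga1 a i hia
          subst this
          exact (hc4 x hxB).symm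
        · exact hB.adj_next i x hxB y hyB
    · intro i x hx y hy
      rcases hmem' i x hx with ⟨rfl, rfl⟩ | hxB
      · rw [hB'ne _ (hne2 _)] at hy
        exact hc2 y hy
      · rcases hmem' (i+2) y hy with ⟨rfl, hia⟩ | hyB
        · have : i = a + 3 := hga2 a i hia
          subst this
          exact fun h => hc3 x hxB h.symm
        · exact hB.not_adj_skip i x hxB y hyB
    · intro z hz
      obtain ⟨T, ⟨i, rfl⟩, hT⟩ := hsub hz
      exact Set.mem_iUnion.2 ⟨i, hBsub i hT⟩
  have hXeq : (⋃ i, B' i) = insert v (⋃ i, B i) := by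
    ext z
    simp only [Set.mem_iUnion, Set.mem_insert_iff]
    constructor
    · rintro ⟨i, hi⟩
      rcases hmem' i z hi with ⟨rfl, rfl⟩ | hz
      · exact Or.inl rfl
      · exact Or.inr ⟨i, hz⟩
    · rintro (rfl | ⟨i, hi⟩)
      · exact ⟨a, by rw [hB'a]; exact Set.mem_insert _ _⟩
      · exact ⟨i, hBsub i hi⟩
  have hle := hmax B' hGood'
  rw [hXeq, Set.ncard_insert_of_notMem hv (Set.toFinite _)] at hle
  omega
end

section
/- Let G be a k-critical graph, let M be a module of G (M is allowed to be trivial), and let ℓ be the chromatic number of the subgraph induced by M. Let G' be the graph obtained from G by substituting a complete graph on ℓ vertices for M. Then G' is k-critical. -/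
open SimpleGraph

private lemma exists_inj_into_range {W : Type*} {n m : ℕ} (A : SimpleGraph W)
    (c : A.Coloring (Fin n)) (h : ∀ N : ℕ, A.Colorable N → m ≤ N) :
    ∃ f : Fin m → Fin n, Function.Injective f ∧ ∀ i, ∃ w, c w = f i := by
  classical
  haveI : Fintype ↥(Set.range ⇑c) := Fintype.ofFinite _
  have c' : A.Coloring ↥(Set.range ⇑c) :=
    SimpleGraph.Coloring.mk (fun w => ⟨c w, Set.mem_range_self w⟩)
      (fun hvw => by simpa [Subtype.ext_iff] using c.valid hvw)
  have hcol : A.Colorable (Fintype.card ↥(Set.range ⇑c)) := c'.colorable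
  have hm : Fintype.card (Fin m) ≤ Fintype.card ↥(Set.range ⇑c) := by
    simpa using h _ hcol
  obtain ⟨f⟩ := Function.Embedding.nonempty_of_card_le hm
  exact ⟨fun i => (f i).1, fun i j hij => f.injective (Subtype.ext hij), fun i => (f i).2⟩

private lemma colorable_of_colorable_diff_singleton {W : Type*} (A : SimpleGraph W)
    (M : Set W) (a : W) {N : ℕ} (h : (A.induce (M \ {a})).Colorable N) :
    (A.induce M).Colorable (N + 1) := by
  classical
  obtain ⟨d⟩ := h
  refine ⟨SimpleGraph.Coloring.mk (fun x => if hx : x.1 = a then Fin.last N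
      else (d ⟨x.1, ⟨x.2, hx⟩⟩).castSucc) ?_⟩
  rintro ⟨x, hx⟩ ⟨y, hy⟩ hadj
  have hxy : A.Adj x y := hadj
  dsimp only
  split_ifs with h1 h2 h2
  · exfalso; rw [h1, h2] at hxy; exact A.irrefl hxy
  · exact (Fin.castSucc_lt_last _).ne'
  · exact (Fin.castSucc_lt_last _).ne
  · intro hc
    exact d.valid (show (A.induce (M \ {a})).Adj ⟨x, ⟨hx, h1⟩⟩ ⟨y, ⟨hy, h2⟩⟩ from hxy)
      (Fin.castSucc_injective _ hc)

private lemma substitute_colorable_aux {V : Type*} (G : SimpleGraph V) (M : Set V)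
    (hM : IsModule G M) {ℓ n : ℕ} (c : G.Coloring (Fin n))
    (hl : ∀ N : ℕ, (G.induce M).Colorable N → ℓ ≤ N) :
    (substitute G M (⊤ : SimpleGraph (Fin ℓ))).Colorable n := by
  classical
  obtain ⟨f, hfinj, hfmem⟩ := exists_inj_into_range (G.induce M)
    (SimpleGraph.Coloring.mk (fun x => c x.1) (fun h => c.valid h)) hl
  refine ⟨SimpleGraph.Coloring.mk (fun x => Sum.rec (fun v => c v.1) (fun i => f i) x) ?_⟩
  rintro (v | i) (w | j) hadj
  · exact c.valid hadj
  · obtain ⟨m, hm, hvm⟩ := hadj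
    have hall := (hM v.1 v.2).resolve_right (fun h => h m hm hvm)
    obtain ⟨⟨m', hm'⟩, hmc⟩ := hfmem j
    intro hc
    exact c.valid (hall m' hm') ((hc.trans hmc.symm :))
  · obtain ⟨m, hm, hvm⟩ := hadj
    have hall := (hM w.1 w.2).resolve_right (fun h => h m hm hvm)
    obtain ⟨⟨m', hm'⟩, hmc⟩ := hfmem i
    intro hc
    exact c.valid (hall m' hm') ((hc.symm.trans hmc.symm :))
  · exact fun hc => hadj (hfinj hc)

private lemma colorable_of_substitute_colorable {V : Type*} (G : SimpleGraph V)
    (M : Set V) (hM : IsModule G M) {ℓ n : ℕ}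
    (d : (G.induce M).Coloring (Fin ℓ))
    (h : (substitute G M (⊤ : SimpleGraph (Fin ℓ))).Colorable n) :
    G.Colorable n := by
  classical
  obtain ⟨c⟩ := h
  refine ⟨SimpleGraph.Coloring.mk (fun v => if hv : v ∈ M then c (Sum.inr (d ⟨v, hv⟩))
      else c (Sum.inl ⟨v, hv⟩)) ?_⟩
  intro v w hvw
  split_ifs with h1 h2 h2
  · exact c.valid (show (⊤ : SimpleGraph (Fin ℓ)).Adj _ _ from
      d.valid (show (G.induce M).Adj ⟨v, h1⟩ ⟨w, h2⟩ from hvw))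
  · exact c.valid (show (substitute G M (⊤ : SimpleGraph (Fin ℓ))).Adj
      (Sum.inr _) (Sum.inl ⟨w, h2⟩) from ⟨v, h1, hvw.symm⟩)
  · exact c.valid (show (substitute G M (⊤ : SimpleGraph (Fin ℓ))).Adj
      (Sum.inl ⟨v, h1⟩) (Sum.inr _) from ⟨w, h2, hvw⟩)
  · exact c.valid hvw

/-- Substituting a clique on `χ(M)` vertices for a module `M` of a `k`-critical
graph yields a `k`-critical graph. -/
theorem substitute_clique_critical {V : Type*} [Fintype V]
    (G : SimpleGraph V) (k : ℕ) (hk : 1 ≤ k) (hG : IsKCritical G k)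
    (M : Set V) (hM : IsModule G M) (ℓ : ℕ)
    (hℓ : (G.induce M).chromaticNumber = ℓ) :
    IsKCritical (substitute G M (⊤ : SimpleGraph (Fin ℓ))) k := by
  classical
  obtain ⟨hχ, hcrit⟩ := hG
  have hl : ∀ N : ℕ, (G.induce M).Colorable N → ℓ ≤ N := by
    intro N hN
    have := hN.chromaticNumber_le
    rw [hℓ] at this
    exact_mod_cast this
  have hGk : G.Colorable k := chromaticNumber_le_iff_colorable.mp (le_of_eq hχ)
  have dM : (G.induce M).Coloring (Fin ℓ) :=
    (chromaticNumber_le_iff_colorable.mp (le_of_eq hℓ)).some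
  constructor
  · -- chromatic number = k
    apply le_antisymm
    · exact (substitute_colorable_aux G M hM hGk.some hl).chromaticNumber_le
    · haveI : Fintype ({v : V // v ∉ M} ⊕ Fin ℓ) := Fintype.ofFinite _
      have h1 := (substitute G M (⊤ : SimpleGraph (Fin ℓ))).colorable_chromaticNumber_of_fintype
      have h2 : G.Colorable _ := colorable_of_substitute_colorable G M hM dM h1
      have h3 : (k : ℕ∞) ≤ (ENat.toNat
          (substitute G M (⊤ : SimpleGraph (Fin ℓ))).chromaticNumber : ℕ∞) := by
        rw [← hχ]; exact h2.chromaticNumber_le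
      have h4 : (substitute G M (⊤ : SimpleGraph (Fin ℓ))).chromaticNumber ≠ ⊤ :=
        chromaticNumber_ne_top_iff_exists.mpr ⟨_, h1⟩
      rwa [ENat.coe_toNat h4] at h3
  · -- every proper induced subgraph is (k-1)-colorable
    intro s hs
    by_cases hA : ∃ v : {v : V // v ∉ M}, (Sum.inl v : {v : V // v ∉ M} ⊕ Fin ℓ) ∉ s
    · -- Case A : some outside vertex is missing
      obtain ⟨v₀, hv₀⟩ := hA
      let t : Set V := {v : V | v ∈ M ∨ ∃ h : v ∉ M,
        (Sum.inl ⟨v, h⟩ : {v : V // v ∉ M} ⊕ Fin ℓ) ∈ s}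
      have ht : t ≠ Set.univ := by
        intro h
        have hmem : v₀.1 ∈ t := h ▸ Set.mem_univ _
        rcases hmem with h1 | ⟨h1, h2⟩
        · exact v₀.2 h1
        · exact hv₀ h2
      have c : (G.induce t).Coloring (Fin (k - 1)) := (hcrit t ht).some
      obtain ⟨f, hfinj, hfmem⟩ := exists_inj_into_range (G.induce M)
        (SimpleGraph.Coloring.mk (fun x => c ⟨x.1, Or.inl x.2⟩) (fun h => c.valid h)) hl
      refine ⟨SimpleGraph.Coloring.mk (fun x : ↥s =>
        match x with
        | ⟨Sum.inl v, hx⟩ => c ⟨v.1, Or.inr ⟨v.2, hx⟩⟩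
        | ⟨Sum.inr i, _⟩ => f i) ?_⟩
      rintro ⟨(v | i), hx⟩ ⟨(w | j), hy⟩ hadj
      · exact c.valid (show (G.induce t).Adj ⟨v.1, Or.inr ⟨v.2, hx⟩⟩
          ⟨w.1, Or.inr ⟨w.2, hy⟩⟩ from hadj)
      · obtain ⟨m, hm, hvm⟩ := (hadj : ∃ m ∈ M, G.Adj v.1 m)
        have hall := (hM v.1 v.2).resolve_right (fun h => h m hm hvm)
        obtain ⟨⟨m', hm'⟩, hmc⟩ := hfmem j
        intro hc
        exact c.valid (show (G.induce t).Adj ⟨v.1, Or.inr ⟨v.2, hx⟩⟩ ⟨m', Or.inl hm'⟩ from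
          hall m' hm') ((hc.trans hmc.symm :))
      · obtain ⟨m, hm, hvm⟩ := (hadj : ∃ m ∈ M, G.Adj w.1 m)
        have hall := (hM w.1 w.2).resolve_right (fun h => h m hm hvm)
        obtain ⟨⟨m', hm'⟩, hmc⟩ := hfmem i
        intro hc
        exact c.valid (show (G.induce t).Adj ⟨w.1, Or.inr ⟨w.2, hy⟩⟩ ⟨m', Or.inl hm'⟩ from
          hall m' hm') ((hc.symm.trans hmc.symm :))
      · exact fun hc => (hadj : i ≠ j) (hfinj hc)
    · -- Case B : all outside vertices present, a clique vertex is missing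
      push_neg at hA
      have hB : ∃ i : Fin ℓ, (Sum.inr i : {v : V // v ∉ M} ⊕ Fin ℓ) ∉ s := by
        by_contra h
        push_neg at h
        apply hs
        ext x
        simp only [Set.mem_univ, iff_true]
        cases x with
        | inl v => exact hA v
        | inr i => exact h i
      obtain ⟨i₀, hi₀⟩ := hB
      have hMne : M.Nonempty := by
        by_contra h
        rw [Set.not_nonempty_iff_eq_empty] at h
        subst h
        haveI : IsEmpty (↥(∅ : Set V)) := ⟨fun x => x.2⟩
        rw [chromaticNumber_eq_zero_of_isEmpty] at hℓ
        have hℓ0 : ℓ = 0 := by exact_mod_cast hℓ.symm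
        have hpos : 0 < ℓ := i₀.pos
        omega
      obtain ⟨m₀, hm₀⟩ := hMne
      let t : Set V := {m₀}ᶜ
      have ht : t ≠ Set.univ := by
        intro h
        have hmem : m₀ ∈ t := h ▸ Set.mem_univ _
        exact hmem rfl
      have c : (G.induce t).Coloring (Fin (k - 1)) := (hcrit t ht).some
      let K : Set (Fin ℓ) := {i : Fin ℓ | (Sum.inr i : {v : V // v ∉ M} ⊕ Fin ℓ) ∈ s}
      have hl' : ∀ N : ℕ, (G.induce (M \ {m₀})).Colorable N → Fintype.card ↥K ≤ N := by
        intro N hN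
        have h1 : (G.induce M).Colorable (N + 1) :=
          colorable_of_colorable_diff_singleton G M m₀ hN
        have h2 : ℓ ≤ N + 1 := hl _ h1
        have h3 : Fintype.card ↥K < ℓ := by
          have := Fintype.card_subtype_lt (p := fun i => i ∈ K) (x := i₀) hi₀
          simpa using this
        omega
      obtain ⟨f, hfinj, hfmem⟩ := exists_inj_into_range (G.induce (M \ {m₀}))
        (SimpleGraph.Coloring.mk (fun x => c ⟨x.1, x.2.2⟩) (fun h => c.valid h)) hl'
      let e : ↥K ≃ Fin (Fintype.card ↥K) := Fintype.equivFin ↥K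
      have hvt : ∀ v : {v : V // v ∉ M}, v.1 ∈ t := by
        intro v h
        exact v.2 (show (v : V) ∈ M from h.symm ▸ hm₀)
      refine ⟨SimpleGraph.Coloring.mk (fun x : ↥s =>
        match x with
        | ⟨Sum.inl v, _⟩ => c ⟨v.1, hvt v⟩
        | ⟨Sum.inr i, hx⟩ => f (e ⟨i, hx⟩)) ?_⟩
      rintro ⟨(v | i), hx⟩ ⟨(w | j), hy⟩ hadj
      · exact c.valid (show (G.induce t).Adj ⟨v.1, hvt v⟩ ⟨w.1, hvt w⟩ from hadj)
      · obtain ⟨m, hm, hvm⟩ := (hadj : ∃ m ∈ M, G.Adj v.1 m)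
        have hall := (hM v.1 v.2).resolve_right (fun h => h m hm hvm)
        obtain ⟨⟨m', hm'⟩, hmc⟩ := hfmem (e ⟨j, hy⟩)
        intro hc
        exact c.valid (show (G.induce t).Adj ⟨v.1, hvt v⟩ ⟨m', hm'.2⟩ from hall m' hm'.1)
          ((hc.trans hmc.symm :))
      · obtain ⟨m, hm, hvm⟩ := (hadj : ∃ m ∈ M, G.Adj w.1 m)
        have hall := (hM w.1 w.2).resolve_right (fun h => h m hm hvm)
        obtain ⟨⟨m', hm'⟩, hmc⟩ := hfmem (e ⟨i, hx⟩)
        intro hc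
        exact c.valid (show (G.induce t).Adj ⟨w.1, hvt w⟩ ⟨m', hm'.2⟩ from hall m' hm'.1)
          ((hc.symm.trans hmc.symm :))
      · intro hc
        exact (hadj : i ≠ j) (Subtype.mk_eq_mk.mp (e.injective (hfinj hc)))
end
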